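/- For every positive integer N, the truncated Schur Q-multiple zeta function of a one-row shape (r) decomposes as ζ_{(r)}^{Q,N}(s_1,...,s_r) = Σ_{ℓ} 2^{dep(ℓ)} ζ^N(ℓ), where ℓ ranges over all compositions obtained from (s_1,...,s_r) by replacing each of the r−1 separators by either a comma or a plus sign, dep(ℓ) is the number of parts of ℓ, and ζ^N denotes the truncated multiple zeta function ζ^N(t_1,...,t_k) = Σ_{0 < m_1 < ... < m_k ≤ N} m_1^{-t_1}···m_k^{-t_k}. -/

import Mathlib

noncomputable section

/-! Marked letters `{1' < 1 < 2' < 2 < ⋯}` are encoded by positive integer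
ranks: `i' = 2i-1` (odd), `i = 2i` (even), `|rank| = (rank+1)/2`. -/

/-- Replace each separator of the index `(a, b_1, …, b_m)` by a comma
(`true`) or a plus (`false`), producing the resulting composition. -/
def fillIndex : ℂ → List (Bool × ℂ) → List ℂ
  | a, [] => [a]
  | a, (true, b) :: rest => a :: fillIndex b rest
  | a, (false, b) :: rest => fillIndex (a + b) rest

/-- Truncated multiple zeta value with summation starting at `lo`:
`∑_{lo ≤ m_1 < m_2 < ⋯ ≤ N} ∏ m_i^{-t_i}`. -/
def zetaNfrom (N : ℕ) : ℕ → List ℂ → ℂ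
  | _, [] => 1
  | lo, t :: rest => ∑ m ∈ Finset.Icc lo N, (m : ℂ) ^ (-t) * zetaNfrom N (m + 1) rest

/-- The truncated multiple zeta function
`ζ^N(t_1,…,t_k) = ∑_{0 < m_1 < ⋯ < m_k ≤ N} m_1^{-t_1} ⋯ m_k^{-t_k}`. -/
def zetaN (N : ℕ) (l : List ℂ) : ℂ := zetaNfrom N 1 l

/-- The truncated one-row Schur `Q`-multiple zeta function
`ζ_{(r)}^{Q,N}(s_1,…,s_r)`: the sum over one-row semi-standard marked shifted
tableaux (weakly increasing sequences of marked letters `≤ N` with no repeated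
primed letter) of `∏ |m_i|^{-s_i}`. -/
def zetaQrowN (N r : ℕ) (s : Fin r → ℂ) : ℂ :=
  ∑' M : {M : Fin r → ℕ // (∀ i, 1 ≤ M i ∧ M i ≤ 2 * N) ∧ Monotone M ∧
      (∀ i j, i ≠ j → M i = M j → ¬ Odd (M i))},
    ∏ i, ((((M.1 i + 1) / 2 : ℕ)) : ℂ) ^ (-(s i))



def QP (N lo : ℕ) {r : ℕ} (M : Fin r → ℕ) : Prop :=
  (∀ i, lo ≤ M i ∧ M i ≤ 2 * N) ∧ Monotone M ∧
    (∀ i j, i ≠ j → M i = M j → ¬ Odd (M i))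

instance QPfinite (N lo r : ℕ) : Finite {M : Fin r → ℕ // QP N lo M} := by
  apply Finite.of_injective
    (fun M : {M : Fin r → ℕ // QP N lo M} =>
      (fun i => (⟨M.1 i, by have := (M.2.1 i).2; omega⟩ : Fin (2 * N + 1))))
  intro M M' h
  apply Subtype.ext; funext i
  exact congrArg Fin.val (congrFun h i)

def Qsum (N lo r : ℕ) (s : Fin r → ℂ) : ℂ :=
  ∑' M : {M : Fin r → ℕ // QP N lo M},
    ∏ i, ((((M.1 i + 1) / 2 : ℕ)) : ℂ) ^ (-(s i))

lemma QP_tail {N lo r : ℕ} {M : Fin (r + 1) → ℕ} (h : QP N lo M) :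
    QP N (2 * ((M 0 + 1) / 2)) (fun i => M i.succ) := by
  obtain ⟨hb, hm, ho⟩ := h
  refine ⟨fun i => ⟨?_, (hb i.succ).2⟩, fun i j hij => hm (Fin.succ_le_succ_iff.mpr hij),
    fun i j hij hEq => ho i.succ j.succ (fun hc => hij (Fin.succ_injective _ hc)) hEq⟩
  show 2 * ((M 0 + 1) / 2) ≤ M i.succ
  have h1 : M 0 ≤ M i.succ := hm (Fin.zero_le _)
  by_cases hodd : Odd (M 0)
  · have h2 : M 0 ≠ M i.succ := fun hEq => ho 0 i.succ (Fin.succ_ne_zero i).symm hEq hodd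
    have h3 : M 0 % 2 = 1 := Nat.odd_iff.mp hodd
    omega
  · have h3 : M 0 % 2 = 0 := Nat.even_iff.mp (Nat.not_odd_iff_even.mp hodd)
    omega

lemma QP_cons {N lo r : ℕ} {m : ℕ} (hm1 : lo ≤ m) (hm2 : m ≤ 2 * N) {M' : Fin r → ℕ}
    (h : QP N (2 * ((m + 1) / 2)) M') : QP N lo (Fin.cons m M') := by
  obtain ⟨hb, hmono, ho⟩ := h
  have hmle : ∀ i, m ≤ M' i ∧ (Odd m → m ≠ M' i) := fun i => by
    have h1 := (hb i).1
    constructor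
    · omega
    · intro hodd; have := Nat.odd_iff.mp hodd; omega
  refine ⟨?_, ?_, ?_⟩
  · intro i
    induction i using Fin.cases with
    | zero => simpa using ⟨hm1, hm2⟩
    | succ i =>
      simp only [Fin.cons_succ]
      exact ⟨le_trans hm1 (hmle i).1, (hb i).2⟩
  · intro a b hab
    induction a using Fin.cases with
    | zero =>
      induction b using Fin.cases with
      | zero => exact le_refl _
      | succ b => simpa [Fin.cons_zero, Fin.cons_succ] using (hmle b).1
    | succ a =>
      induction b using Fin.cases with
      | zero => exact absurd (Fin.le_zero_iff.mp hab) (Fin.succ_ne_zero a)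
      | succ b =>
        simp only [Fin.cons_succ]
        exact hmono (Fin.succ_le_succ_iff.mp hab)
  · intro i j hij hEq
    induction i using Fin.cases with
    | zero =>
      induction j using Fin.cases with
      | zero => exact absurd rfl hij
      | succ j =>
        simp only [Fin.cons_zero, Fin.cons_succ] at hEq ⊢
        intro hodd; exact (hmle j).2 hodd hEq
    | succ i =>
      induction j using Fin.cases with
      | zero =>
        simp only [Fin.cons_zero, Fin.cons_succ] at hEq ⊢
        intro hodd
        exact (hmle i).2 (hEq ▸ hodd) hEq.symm
      | succ j =>
        simp only [Fin.cons_succ] at hEq ⊢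
        exact ho i j (fun hc => hij (congrArg Fin.succ hc)) hEq

def consEquivQP (N lo r : ℕ) :
    {M : Fin (r + 1) → ℕ // QP N lo M} ≃
      Σ m : (Finset.Icc lo (2 * N) : Finset ℕ),
        {M' : Fin r → ℕ // QP N (2 * ((m.1 + 1) / 2)) M'} where
  toFun M := ⟨⟨M.1 0, Finset.mem_Icc.mpr (M.2.1 0)⟩, ⟨fun i => M.1 i.succ, QP_tail M.2⟩⟩
  invFun x := ⟨Fin.cons x.1.1 x.2.1,
    QP_cons (Finset.mem_Icc.mp x.1.2).1 (Finset.mem_Icc.mp x.1.2).2 x.2.2⟩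
  left_inv M := Subtype.ext (Fin.cons_self_tail M.1)
  right_inv x := rfl

lemma Qsum_zero (N lo : ℕ) (s : Fin 0 → ℂ) : Qsum N lo 0 s = 1 := by
  rw [Qsum, tsum_eq_single ⟨(fun i => i.elim0), by
      exact ⟨fun i => i.elim0, fun a => a.elim0, fun i => i.elim0⟩⟩ ?_]
  · simp
  · intro b hb
    exact absurd (Subtype.ext (funext fun i => i.elim0)) hb

set_option maxHeartbeats 1000000 in
lemma Qsum_succ (N lo r : ℕ) (s : Fin (r + 1) → ℂ) :
    Qsum N lo (r + 1) s = ∑ m ∈ Finset.Icc lo (2 * N),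
      (((m + 1) / 2 : ℕ) : ℂ) ^ (-(s 0)) *
        Qsum N (2 * ((m + 1) / 2)) r (fun i => s i.succ) := by
  classical
  letI : Fintype {M : Fin (r + 1) → ℕ // QP N lo M} :=
    @Fintype.ofFinite _ (QPfinite N lo (r + 1))
  letI : ∀ m : ℕ, Fintype {M' : Fin r → ℕ // QP N (2 * ((m + 1) / 2)) M'} :=
    fun m => @Fintype.ofFinite _ (QPfinite N (2 * ((m + 1) / 2)) r)
  rw [Qsum, tsum_fintype, ← Equiv.sum_comp (consEquivQP N lo r).symm,
    ← Finset.univ_sigma_univ, Finset.sum_sigma]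
  rw [← Finset.sum_coe_sort (Finset.Icc lo (2 * N)) (fun m =>
      (((m + 1) / 2 : ℕ) : ℂ) ^ (-(s 0)) * Qsum N (2 * ((m + 1) / 2)) r (fun i => s i.succ))]
  apply Finset.sum_congr rfl
  intro m _
  rw [Qsum, tsum_fintype, Finset.mul_sum]
  apply Finset.sum_congr rfl
  intro M' _
  simp only [consEquivQP, Equiv.coe_fn_symm_mk, Fin.prod_univ_succ, Fin.cons_zero,
    Fin.cons_succ]
  rfl

def Rfun (N : ℕ) : List ℂ → ℕ → ℂ
  | [], _ => 1
  | b :: t, j => (j : ℂ) ^ (-b) * Rfun N t j +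
      ∑ m ∈ Finset.Icc (j + 1) N, 2 * (m : ℂ) ^ (-b) * Rfun N t m

lemma pair_sum (N j : ℕ) (hj : 1 ≤ j) (g : ℕ → ℂ) :
    ∑ m ∈ Finset.Icc (2 * j - 1) (2 * N), g m
      = ∑ k ∈ Finset.Icc j N, (g (2 * k - 1) + g (2 * k)) := by
  have hset : Finset.Icc (2 * j - 1) (2 * N)
      = (Finset.Icc j N).biUnion (fun k => {2 * k - 1, 2 * k}) := by
    ext m
    simp only [Finset.mem_Icc, Finset.mem_biUnion, Finset.mem_insert, Finset.mem_singleton]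
    constructor
    · intro h
      exact ⟨(m + 1) / 2, by omega, by omega⟩
    · rintro ⟨k, hk, rfl | rfl⟩ <;> omega
  rw [hset, Finset.sum_biUnion]
  · refine Finset.sum_congr rfl fun k hk => ?_
    have hk1 : 1 ≤ k := le_trans hj (Finset.mem_Icc.mp hk).1
    rw [Finset.sum_insert (by simp only [Finset.mem_singleton]; omega),
      Finset.sum_singleton]
  · intro a ha b hb hab
    simp only [Finset.mem_coe, Finset.mem_Icc] at ha hb
    refine Finset.disjoint_left.mpr ?_
    intro x hx hx'
    simp only [Finset.mem_insert, Finset.mem_singleton] at hx hx'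
    have ha1 : 1 ≤ a := le_trans hj ha.1
    have hb1 : 1 ≤ b := le_trans hj hb.1
    exact hab (by omega)

lemma L1 (N : ℕ) : ∀ (r : ℕ) (j : ℕ) (s : Fin r → ℂ), 1 ≤ j → j ≤ N →
    Qsum N (2 * j) r s = Rfun N (List.ofFn s) j := by
  intro r
  induction r with
  | zero => intro j s _ _; simp [Qsum_zero, Rfun, List.ofFn_zero]
  | succ r ih =>
    intro j s hj1 hjN
    rw [Qsum_succ, List.ofFn_succ, Rfun]
    have h2j : 2 * j ≤ 2 * N := by omega
    rw [Finset.Icc_eq_cons_Ioc h2j, Finset.sum_cons]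
    have e1 : (2 * j + 1) / 2 = j := by omega
    have e2 : Finset.Ioc (2 * j) (2 * N) = Finset.Icc (2 * (j + 1) - 1) (2 * N) := by
      rw [← Finset.Icc_add_one_left_eq_Ioc]; congr 1 <;> omega
    rw [e2, pair_sum N (j + 1) (by omega)]
    congr 1
    · rw [e1, ih j (fun i => s i.succ) hj1 hjN]
    · refine Finset.sum_congr rfl fun k hk => ?_
      obtain ⟨hk1, hk2⟩ := Finset.mem_Icc.mp hk
      have f1 : (2 * k - 1 + 1) / 2 = k := by omega
      have f2 : (2 * k + 1) / 2 = k := by omega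
      have f3 : 2 * ((2 * k - 1 + 1) / 2) = 2 * k := by omega
      have f4 : 2 * ((2 * k + 1) / 2) = 2 * k := by omega
      rw [f3, f4, f1, f2, ih k (fun i => s i.succ) (by omega) hk2]
      ring

lemma L2 (N r : ℕ) (s : Fin (r + 1) → ℂ) :
    Qsum N 1 (r + 1) s = ∑ m ∈ Finset.Icc 1 N,
      2 * (m : ℂ) ^ (-(s 0)) * Rfun N (List.ofFn fun i => s i.succ) m := by
  rw [Qsum_succ]
  have e : Finset.Icc 1 (2 * N) = Finset.Icc (2 * 1 - 1) (2 * N) := by norm_num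
  rw [e, pair_sum N 1 le_rfl]
  refine Finset.sum_congr rfl fun k hk => ?_
  obtain ⟨hk1, hk2⟩ := Finset.mem_Icc.mp hk
  have f1 : (2 * k - 1 + 1) / 2 = k := by omega
  have f2 : (2 * k + 1) / 2 = k := by omega
  have f3 : 2 * ((2 * k - 1 + 1) / 2) = 2 * k := by omega
  have f4 : 2 * ((2 * k + 1) / 2) = 2 * k := by omega
  rw [f3, f4, f1, f2, L1 N r k (fun i => s i.succ) hk1 hk2]
  ring

lemma R1 (N : ℕ) : ∀ (k : ℕ) (t : Fin k → ℂ) (a : ℂ) (j : ℕ), 1 ≤ j →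
    (∑ c : Fin k → Bool,
      (2 : ℂ) ^ (fillIndex a (List.ofFn fun i => (c i, t i))).length *
        zetaNfrom N j (fillIndex a (List.ofFn fun i => (c i, t i))))
    = ∑ m ∈ Finset.Icc j N, 2 * (m : ℂ) ^ (-a) * Rfun N (List.ofFn t) m := by
  intro k
  induction k with
  | zero =>
    intro t a j hj
    rw [Fintype.sum_unique]
    simp only [List.ofFn_zero, fillIndex, zetaNfrom, Rfun, List.length_cons,
      List.length_nil, mul_one, pow_one]
    rw [Finset.mul_sum]
    refine Finset.sum_congr rfl fun m _ => by ring
  | succ k ih =>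
    intro t a j hj
    rw [← Equiv.sum_comp (Fin.consEquiv fun _ : Fin (k + 1) => Bool),
      Fintype.sum_prod_type, Fintype.sum_bool]
    have hofn : ∀ (b : Bool) (c : Fin k → Bool),
        (List.ofFn fun i : Fin (k + 1) => ((Fin.consEquiv fun _ : Fin (k + 1) => Bool) (b, c) i, t i))
          = (b, t 0) :: List.ofFn (fun i : Fin k => (c i, t i.succ)) := by
      intro b c
      rw [List.ofFn_succ]
      simp [Fin.consEquiv]
    simp only [hofn]
    simp only [fillIndex, List.length_cons, zetaNfrom]
    have htrue : (∑ c : Fin k → Bool,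
          (2 : ℂ) ^ ((fillIndex (t 0) (List.ofFn fun i : Fin k => (c i, t i.succ))).length + 1) *
            ∑ m ∈ Finset.Icc j N, (m : ℂ) ^ (-a) *
              zetaNfrom N (m + 1) (fillIndex (t 0) (List.ofFn fun i : Fin k => (c i, t i.succ))))
        = ∑ m ∈ Finset.Icc j N, (2 * (m : ℂ) ^ (-a)) *
            (∑ m' ∈ Finset.Icc (m + 1) N, 2 * (m' : ℂ) ^ (-(t 0)) *
              Rfun N (List.ofFn fun i : Fin k => t i.succ) m') := by
      have step1 : ∀ c : Fin k → Bool,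
          (2 : ℂ) ^ ((fillIndex (t 0) (List.ofFn fun i : Fin k => (c i, t i.succ))).length + 1) *
            ∑ m ∈ Finset.Icc j N, (m : ℂ) ^ (-a) *
              zetaNfrom N (m + 1) (fillIndex (t 0) (List.ofFn fun i : Fin k => (c i, t i.succ)))
          = ∑ m ∈ Finset.Icc j N, (2 * (m : ℂ) ^ (-a)) *
              ((2 : ℂ) ^ (fillIndex (t 0) (List.ofFn fun i : Fin k => (c i, t i.succ))).length *
                zetaNfrom N (m + 1) (fillIndex (t 0) (List.ofFn fun i : Fin k => (c i, t i.succ)))) := by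
        intro c
        rw [Finset.mul_sum]
        refine Finset.sum_congr rfl fun m _ => by rw [pow_succ]; ring
      rw [Finset.sum_congr rfl fun c _ => step1 c, Finset.sum_comm]
      refine Finset.sum_congr rfl fun m _ => ?_
      rw [← Finset.mul_sum, ih (fun i => t i.succ) (t 0) (m + 1) (by omega)]
    have hfalse : (∑ c : Fin k → Bool,
          (2 : ℂ) ^ (fillIndex (a + t 0) (List.ofFn fun i : Fin k => (c i, t i.succ))).length *
            zetaNfrom N j (fillIndex (a + t 0) (List.ofFn fun i : Fin k => (c i, t i.succ))))
        = ∑ m ∈ Finset.Icc j N, (2 * (m : ℂ) ^ (-a)) *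
            ((m : ℂ) ^ (-(t 0)) * Rfun N (List.ofFn fun i : Fin k => t i.succ) m) := by
      rw [ih (fun i => t i.succ) (a + t 0) j hj]
      refine Finset.sum_congr rfl fun m hm => ?_
      have hm1 : 1 ≤ m := le_trans hj (Finset.mem_Icc.mp hm).1
      have hmne : (m : ℂ) ≠ 0 := Nat.cast_ne_zero.mpr (by omega)
      rw [neg_add, Complex.cpow_add _ _ hmne]
      ring
    rw [htrue, hfalse, ← Finset.sum_add_distrib]
    rw [List.ofFn_succ]
    simp only [Rfun]
    refine Finset.sum_congr rfl fun m _ => by ring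


/-- **Decomposition of `ζ_{(r)}^{Q,N}` into truncated MZVs.**
`ζ_{(r)}^{Q,N}(s_1,…,s_r) = Σ_ℓ 2^{dep(ℓ)} ζ^N(ℓ)`, where `ℓ` ranges over all
compositions obtained from `(s_1,…,s_r)` by replacing each of the `r-1`
separators by a comma or a plus. -/
theorem zetaQrowN_eq_sum_zetaN (N n : ℕ) (hN : 0 < N) (s : Fin (n + 1) → ℂ) :
    zetaQrowN N (n + 1) s =
      ∑ c : Fin n → Bool,
        (2 : ℂ) ^ (fillIndex (s 0) (List.ofFn fun j : Fin n => (c j, s j.succ))).length *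
          zetaN N (fillIndex (s 0) (List.ofFn fun j : Fin n => (c j, s j.succ))) := by
  have h0 : zetaQrowN N (n + 1) s = Qsum N 1 (n + 1) s := rfl
  rw [h0, L2, ← R1 N n (fun i => s i.succ) (s 0) 1 le_rfl]
  rfl
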